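/- Let g := gcd(a1−a2, b1−b2) and let p be a prime with p ∤ D and p > 2*D/g + 1. For ℓ ≥ 0, let m(ℓ) := min{h(S) : S ⊆ M(Δ), #S = ℓ}. Then for every k ≥ 1 the points (x_k, h(T_k)) and (x'_k, h(T'_k)) are vertices of the lower convex hull of the set {(ℓ, m(ℓ)) : ℓ ≥ 0}; explicitly, for all integers ℓ1, ℓ2 with ℓ1 < x_k < ℓ2 one has (ℓ2 − x_k)*m(ℓ1) + (x_k − ℓ1)*m(ℓ2) > (ℓ2 − ℓ1)*h(T_k), and for all ℓ1 < x'_k < ℓ2 one has (ℓ2 − x'_k)*m(ℓ1) + (x'_k − ℓ1)*m(ℓ2) > (ℓ2 − ℓ1)*h(T'_k). -/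

import Mathlib

open Finset

noncomputable section

/-- The weight of a lattice point `P`: `w(P) = ((b1-b2)*x + (a2-a1)*y) / D`
where `D = a2*b1 - a1*b2`. -/
def wt (a1 b1 a2 b2 : ℤ) (P : ℤ × ℤ) : ℚ :=
  (((b1 - b2) * P.1 + (a2 - a1) * P.2 : ℤ) : ℚ) / ((a2 * b1 - a1 * b2 : ℤ) : ℚ)

/-- The lattice points of the cone spanned by the triangle with vertices
`O`, `P1 = (a1,b1)`, `P2 = (a2,b2)`. -/
def MDelta (a1 b1 a2 b2 : ℤ) : Set (ℤ × ℤ) :=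
  {P | ∃ s t : ℚ, 0 ≤ s ∧ 0 ≤ t ∧
    (P.1 : ℚ) = s * a1 + t * a2 ∧ (P.2 : ℚ) = s * b1 + t * b2}

/-- The lattice generated by `P1` and `P2`. -/
def Lambda (a1 b1 a2 b2 : ℤ) : Set (ℤ × ℤ) :=
  {P | ∃ m n : ℤ, P = (m * a1 + n * a2, m * b1 + n * b2)}

/-- The lattice points of the fundamental parallelogram
`{s*P1 + t*P2 : 0 ≤ s,t < 1}`. -/
def squareInt (a1 b1 a2 b2 : ℤ) : Set (ℤ × ℤ) :=
  {P | ∃ s t : ℚ, 0 ≤ s ∧ s < 1 ∧ 0 ≤ t ∧ t < 1 ∧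
    (P.1 : ℚ) = s * a1 + t * a2 ∧ (P.2 : ℚ) = s * b1 + t * b2}

/-- `h(S, τ) = Σ_{P ∈ S} ⌈w(p·τ(P) - P)⌉` for a multiset indexed by `f` and a
permutation `τ` of the indices. -/
def hTau (p a1 b1 a2 b2 : ℤ) {n : ℕ} (f : Fin n → ℤ × ℤ)
    (τ : Equiv.Perm (Fin n)) : ℤ :=
  ∑ i, ⌈wt a1 b1 a2 b2 (p • f (τ i) - f i)⌉

/-- `h2(S, τ) = Σ_{P ∈ S} R(w(p·τ(P) - P))` where `R(r) = ⌈r⌉ - r`. -/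
def h2Tau (p a1 b1 a2 b2 : ℤ) {n : ℕ} (f : Fin n → ℤ × ℤ)
    (τ : Equiv.Perm (Fin n)) : ℚ :=
  ∑ i, ((⌈wt a1 b1 a2 b2 (p • f (τ i) - f i)⌉ : ℚ)
        - wt a1 b1 a2 b2 (p • f (τ i) - f i))

/-- A canonical indexing of a multiset. -/
def listFn (S : Multiset (ℤ × ℤ)) : Fin S.toList.length → ℤ × ℤ := S.toList.get

/-- `h(S)`: the minimum of `h(S,τ)` over all permutations `τ` of `S`. -/
def hMin (p a1 b1 a2 b2 : ℤ) (S : Multiset (ℤ × ℤ)) : ℤ :=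
  Finset.univ.inf' (Finset.univ_nonempty_iff.mpr ⟨1⟩)
    fun τ : Equiv.Perm (Fin S.toList.length) => hTau p a1 b1 a2 b2 (listFn S) τ

/-- `h2(S)`: the minimum of `h2(S,τ)` over all permutations `τ` of `S`. -/
def h2Min (p a1 b1 a2 b2 : ℤ) (S : Multiset (ℤ × ℤ)) : ℚ :=
  Finset.univ.inf' (Finset.univ_nonempty_iff.mpr ⟨1⟩)
    fun τ : Equiv.Perm (Fin S.toList.length) => h2Tau p a1 b1 a2 b2 (listFn S) τ

/-- Let `g = gcd(a1-a2, b1-b2)` and `p` a prime with `p ∤ D` and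
`p > 2·D/g + 1`.  Writing `m(ℓ)` for the minimum of `h(S)` over subsets
`S ⊆ M(Δ)` of cardinality `ℓ`, the points `(x_k, h(T_k))` and `(x'_k, h(T'_k))`
are vertices of the lower convex hull of `{(ℓ, m(ℓ))}`: for all `ℓ1 < x_k < ℓ2`
one has `(ℓ2 - x_k)·m(ℓ1) + (x_k - ℓ1)·m(ℓ2) > (ℓ2 - ℓ1)·h(T_k)`, and
similarly at `x'_k`. -/
theorem permGetEquiv {α : Type*} {l l' : List α} (h : l.Perm l') :
    ∃ e : Fin l'.length ≃ Fin l.length, ∀ i, l'.get i = l.get (e i) := by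
  induction h with
  | nil => exact ⟨Equiv.refl _, fun i => i.elim0⟩
  | cons x h ih =>
      obtain ⟨e, he⟩ := ih
      refine ⟨(finSuccEquiv _).trans ((Equiv.optionCongr e).trans (finSuccEquiv _).symm), ?_⟩
      intro i
      refine Fin.cases ?_ (fun j => ?_) i
      · simp
      · simpa using he j
  | swap x y l =>
      refine ⟨(Equiv.swap 0 1 : Fin (l.length + 1 + 1) ≃ Fin (l.length + 1 + 1)), ?_⟩
      intro i
      refine Fin.cases ?_ (fun j => ?_) i
      · simp
      · refine Fin.cases ?_ (fun j2 => ?_) j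
        · simp
        · have h1 : (j2.succ.succ : Fin (l.length + 1 + 1)) ≠ 0 := Fin.succ_ne_zero _
          have h2 : (j2.succ.succ : Fin (l.length + 1 + 1)) ≠ 1 := by
            rw [← Fin.succ_zero_eq_one]
            exact fun hc => Fin.succ_ne_zero _ (Fin.succ_injective _ hc)
          have h3 := Equiv.swap_apply_of_ne_of_ne h1 h2 (a := (0 : Fin (l.length + 1 + 1))) (b := 1)
          show (x :: y :: l).get j2.succ.succ
            = (y :: x :: l).get ((Equiv.swap (0 : Fin (l.length + 1 + 1)) 1) j2.succ.succ)
          rw [h3]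
          simp
  | trans h1 h2 ih1 ih2 =>
      obtain ⟨e1, he1⟩ := ih1
      obtain ⟨e2, he2⟩ := ih2
      exact ⟨e2.trans e1, fun i => by rw [he2 i]; exact he1 (e2 i)⟩

def cost (p a1 b1 a2 b2 : ℤ) (X Y : ℤ × ℤ) : ℚ :=
  (⌈wt a1 b1 a2 b2 (p • Y - X)⌉ : ℚ) - wt a1 b1 a2 b2 (p • Y - X)

def aMinF (p a1 b1 a2 b2 : ℤ) {n : ℕ} (f : Fin n → ℤ × ℤ) : ℚ :=
  Finset.univ.inf' (Finset.univ_nonempty_iff.mpr ⟨1⟩)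
    fun τ : Equiv.Perm (Fin n) => ∑ i, cost p a1 b1 a2 b2 (f i) (f (τ i))

lemma h2Min_eq_aMinF (p a1 b1 a2 b2 : ℤ) (S : Multiset (ℤ × ℤ)) :
    h2Min p a1 b1 a2 b2 S = aMinF p a1 b1 a2 b2 (listFn S) := rfl

lemma aMinF_le (p a1 b1 a2 b2 : ℤ) {n : ℕ} (f : Fin n → ℤ × ℤ) (τ : Equiv.Perm (Fin n)) :
    aMinF p a1 b1 a2 b2 f ≤ ∑ i, cost p a1 b1 a2 b2 (f i) (f (τ i)) :=
  Finset.inf'_le _ (Finset.mem_univ τ)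

lemma exists_aMinF (p a1 b1 a2 b2 : ℤ) {n : ℕ} (f : Fin n → ℤ × ℤ) :
    ∃ τ : Equiv.Perm (Fin n),
      aMinF p a1 b1 a2 b2 f = ∑ i, cost p a1 b1 a2 b2 (f i) (f (τ i)) := by
  obtain ⟨τ, -, h⟩ := Finset.exists_mem_eq_inf' (Finset.univ_nonempty_iff.mpr ⟨1⟩)
    (fun τ : Equiv.Perm (Fin n) => ∑ i, cost p a1 b1 a2 b2 (f i) (f (τ i)))
  exact ⟨τ, h⟩

lemma aMinF_le_reindex (p a1 b1 a2 b2 : ℤ) {n n' : ℕ} (f : Fin n → ℤ × ℤ)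
    (e : Fin n' ≃ Fin n) :
    aMinF p a1 b1 a2 b2 (f ∘ e) ≤ aMinF p a1 b1 a2 b2 f := by
  obtain ⟨τ, hτ⟩ := exists_aMinF p a1 b1 a2 b2 f
  have h1 := aMinF_le p a1 b1 a2 b2 (f ∘ e) ((e.trans τ).trans e.symm)
  rw [hτ]
  refine h1.trans (le_of_eq ?_)
  have h2 : ∀ i : Fin n', (f ∘ e) (((e.trans τ).trans e.symm) i) = f (τ (e i)) := by
    intro i; simp [Function.comp]
  rw [Finset.sum_congr rfl fun i _ => by rw [h2 i]]
  exact Equiv.sum_comp e (fun j => cost p a1 b1 a2 b2 (f j) (f (τ j)))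

lemma aMinF_reindex (p a1 b1 a2 b2 : ℤ) {n n' : ℕ} (f : Fin n → ℤ × ℤ)
    (e : Fin n' ≃ Fin n) :
    aMinF p a1 b1 a2 b2 (f ∘ e) = aMinF p a1 b1 a2 b2 f := by
  refine le_antisymm (aMinF_le_reindex p a1 b1 a2 b2 f e) ?_
  have := aMinF_le_reindex p a1 b1 a2 b2 (f ∘ e) e.symm
  rwa [show (f ∘ e) ∘ e.symm = f from funext fun i => by simp] at this

lemma aMinF_congr (p a1 b1 a2 b2 : ℤ) {n n' : ℕ} (f : Fin n → ℤ × ℤ)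
    (f' : Fin n' → ℤ × ℤ) (e : Fin n' ≃ Fin n) (h : ∀ i, f' i = f (e i)) :
    aMinF p a1 b1 a2 b2 f' = aMinF p a1 b1 a2 b2 f := by
  have : f' = f ∘ e := funext h
  rw [this, aMinF_reindex]

def aMinL (p a1 b1 a2 b2 : ℤ) (L : List (ℤ × ℤ)) : ℚ := aMinF p a1 b1 a2 b2 L.get

lemma aMinL_perm (p a1 b1 a2 b2 : ℤ) {L L' : List (ℤ × ℤ)} (h : L.Perm L') :
    aMinL p a1 b1 a2 b2 L = aMinL p a1 b1 a2 b2 L' := by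
  obtain ⟨e, he⟩ := permGetEquiv h
  exact (aMinF_congr p a1 b1 a2 b2 L.get L'.get e he).symm

lemma h2Min_eq_aMinL (p a1 b1 a2 b2 : ℤ) (S : Multiset (ℤ × ℤ)) :
    h2Min p a1 b1 a2 b2 S = aMinL p a1 b1 a2 b2 S.toList := rfl

lemma aMinL_cons_le (p a1 b1 a2 b2 : ℤ) (P : ℤ × ℤ) (L : List (ℤ × ℤ)) (c : ℚ)
    (hc : ∀ X Y, cost p a1 b1 a2 b2 X Y ≤ c) :
    aMinL p a1 b1 a2 b2 (P :: L) ≤ aMinL p a1 b1 a2 b2 L + c := by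
  obtain ⟨τ, hτ⟩ := exists_aMinF p a1 b1 a2 b2 L.get
  set σ : Equiv.Perm (Fin (L.length + 1)) := Equiv.Perm.decomposeFin.symm (0, τ) with hσ
  have hb := aMinF_le p a1 b1 a2 b2 (P :: L).get σ
  refine hb.trans ?_
  show (∑ i : Fin (L.length + 1), cost p a1 b1 a2 b2 ((P :: L).get i) ((P :: L).get (σ i)))
      ≤ aMinL p a1 b1 a2 b2 L + c
  rw [Fin.sum_univ_succ]
  have h0 : σ 0 = 0 := Equiv.Perm.decomposeFin_symm_apply_zero 0 τ
  have hs : ∀ i : Fin L.length, σ i.succ = (τ i).succ := by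
    intro i
    rw [hσ, Equiv.Perm.decomposeFin_symm_apply_succ]
    simp
  have h1 : cost p a1 b1 a2 b2 ((P :: L).get (0 : Fin (L.length + 1)))
      ((P :: L).get (σ 0)) ≤ c := by
    rw [h0]; exact hc _ _
  have h2 : ∀ i : Fin L.length,
      cost p a1 b1 a2 b2 ((P :: L).get i.succ) ((P :: L).get (σ i.succ))
        = cost p a1 b1 a2 b2 (L.get i) (L.get (τ i)) := by
    intro i; rw [hs i]; simp
  rw [Finset.sum_congr rfl fun i _ => h2 i]
  rw [aMinL, hτ]
  linarith

lemma le_aMinL_cons (p a1 b1 a2 b2 : ℤ) (P : ℤ × ℤ) (L : List (ℤ × ℤ)) (c : ℚ)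
    (hc0 : ∀ X Y, 0 ≤ cost p a1 b1 a2 b2 X Y) (hc : ∀ X Y, cost p a1 b1 a2 b2 X Y ≤ c) :
    aMinL p a1 b1 a2 b2 L ≤ aMinL p a1 b1 a2 b2 (P :: L) + c := by
  obtain ⟨σ0, hσ0⟩ := exists_aMinF p a1 b1 a2 b2 (P :: L).get
  have hσ0' : aMinL p a1 b1 a2 b2 (P :: L)
      = ∑ i : Fin (L.length + 1), cost p a1 b1 a2 b2 ((P :: L).get i) ((P :: L).get (σ0 i)) :=
    hσ0
  set σ : Equiv.Perm (Fin (L.length + 1)) := σ0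
  -- σ' fixes 0
  set σ' : Equiv.Perm (Fin (L.length + 1)) := σ.trans (Equiv.swap 0 (σ 0)) with hσ'def
  have hσ'app : ∀ x, σ' x = Equiv.swap 0 (σ 0) (σ x) := fun x => rfl
  have hσ'0 : σ' 0 = 0 := by rw [hσ'app]; exact Equiv.swap_apply_right 0 (σ 0)
  obtain ⟨a, τ, hστ⟩ : ∃ a τ, σ' = Equiv.Perm.decomposeFin.symm (a, τ) :=
    ⟨(Equiv.Perm.decomposeFin σ').1, (Equiv.Perm.decomposeFin σ').2, by simp⟩
  have ha : a = 0 := by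
    have := hσ'0
    rw [hστ] at this
    simpa using this
  subst ha
  have hsucc : ∀ i : Fin L.length, σ' i.succ = (τ i).succ := by
    intro i
    rw [hστ, Equiv.Perm.decomposeFin_symm_apply_succ]
    simp
  -- candidate bound
  have hcand := aMinF_le p a1 b1 a2 b2 L.get τ
  have hFG : ∀ i : Fin L.length,
      L.get (τ i) = (P :: L).get ((Equiv.swap 0 (σ 0)) (σ i.succ)) := by
    intro i
    rw [← hσ'app i.succ, hsucc i]
    simp
  have hbig : aMinL p a1 b1 a2 b2 (P :: L)
      = cost p a1 b1 a2 b2 P ((P :: L).get (σ 0))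
        + ∑ i : Fin L.length, cost p a1 b1 a2 b2 (L.get i) ((P :: L).get (σ i.succ)) := by
    rw [hσ0', Fin.sum_univ_succ]
    simp
  set G : Fin L.length → ℚ :=
    fun i => cost p a1 b1 a2 b2 (L.get i) ((P :: L).get (σ i.succ)) with hG
  have hG0 : ∀ i, 0 ≤ G i := fun i => hc0 _ _
  have hbig' : ∑ i, G i ≤ aMinL p a1 b1 a2 b2 (P :: L) := by
    rw [hbig]
    have := hc0 P ((P :: L).get (σ 0))
    linarith
  show aMinF p a1 b1 a2 b2 L.get ≤ aMinL p a1 b1 a2 b2 (P :: L) + c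
  by_cases hz : σ 0 = 0
  · have hFeq : ∀ i, cost p a1 b1 a2 b2 (L.get i) (L.get (τ i)) = G i := by
      intro i
      have := hFG i
      rw [hz, Equiv.swap_self] at this
      simp only [Equiv.refl_apply] at this
      rw [this]
    have hcc : (0 : ℚ) ≤ c := (hc0 P P).trans (hc P P)
    calc aMinF p a1 b1 a2 b2 L.get
        ≤ ∑ i, cost p a1 b1 a2 b2 (L.get i) (L.get (τ i)) := hcand
      _ = ∑ i, G i := Finset.sum_congr rfl fun i _ => hFeq i
      _ ≤ aMinL p a1 b1 a2 b2 (P :: L) := hbig'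
      _ ≤ aMinL p a1 b1 a2 b2 (P :: L) + c := by linarith
  · have hinv : σ⁻¹ 0 ≠ 0 := by
      intro hcon
      apply hz
      have h5 : σ (σ⁻¹ 0) = 0 := Equiv.apply_symm_apply σ 0
      rw [hcon] at h5
      exact h5
    obtain ⟨j0, hj0succ⟩ := Fin.exists_succ_eq.mpr hinv
    have hj0 : σ j0.succ = 0 := by rw [hj0succ]; exact Equiv.apply_symm_apply σ 0
    have hFeq : ∀ i ∈ Finset.univ.erase j0,
        cost p a1 b1 a2 b2 (L.get i) (L.get (τ i)) = G i := by
      intro i hi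
      have hine : i ≠ j0 := Finset.ne_of_mem_erase hi
      have h1 : σ i.succ ≠ 0 := by
        intro hcon
        exact hine (Fin.succ_injective _ (σ.injective (hcon.trans hj0.symm)))
      have h2 : σ i.succ ≠ σ 0 := fun hcon => Fin.succ_ne_zero i (σ.injective hcon)
      have h3 : (Equiv.swap 0 (σ 0)) (σ i.succ) = σ i.succ :=
        Equiv.swap_apply_of_ne_of_ne h1 h2
      rw [hFG i, h3]
    have hstep : ∑ i, cost p a1 b1 a2 b2 (L.get i) (L.get (τ i)) ≤ c + ∑ i, G i := by
      rw [← Finset.add_sum_erase _ _ (Finset.mem_univ j0)]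
      have e1 : cost p a1 b1 a2 b2 (L.get j0) (L.get (τ j0)) ≤ c := hc _ _
      have e2 : ∑ i ∈ Finset.univ.erase j0, cost p a1 b1 a2 b2 (L.get i) (L.get (τ i))
          = ∑ i ∈ Finset.univ.erase j0, G i := Finset.sum_congr rfl hFeq
      have e3 : ∑ i ∈ Finset.univ.erase j0, G i ≤ ∑ i, G i :=
        Finset.sum_le_sum_of_subset_of_nonneg (Finset.subset_univ _) fun i _ _ => hG0 i
      linarith
    calc aMinF p a1 b1 a2 b2 L.get
        ≤ ∑ i, cost p a1 b1 a2 b2 (L.get i) (L.get (τ i)) := hcand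
      _ ≤ c + ∑ i, G i := hstep
      _ ≤ c + aMinL p a1 b1 a2 b2 (P :: L) := by linarith
      _ = aMinL p a1 b1 a2 b2 (P :: L) + c := add_comm _ _

lemma toList_cons_perm (P : ℤ × ℤ) (S : Multiset (ℤ × ℤ)) :
    (P ::ₘ S).toList.Perm (P :: S.toList) := by
  rw [← Multiset.coe_eq_coe]
  rw [← Multiset.cons_coe, Multiset.coe_toList, Multiset.coe_toList]

lemma h2Min_cons_le (p a1 b1 a2 b2 : ℤ) (P : ℤ × ℤ) (S : Multiset (ℤ × ℤ)) (c : ℚ)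
    (hc : ∀ X Y, cost p a1 b1 a2 b2 X Y ≤ c) :
    h2Min p a1 b1 a2 b2 (P ::ₘ S) ≤ h2Min p a1 b1 a2 b2 S + c := by
  rw [h2Min_eq_aMinL, h2Min_eq_aMinL, aMinL_perm p a1 b1 a2 b2 (toList_cons_perm P S)]
  exact aMinL_cons_le p a1 b1 a2 b2 P S.toList c hc

lemma le_h2Min_cons (p a1 b1 a2 b2 : ℤ) (P : ℤ × ℤ) (S : Multiset (ℤ × ℤ)) (c : ℚ)
    (hc0 : ∀ X Y, 0 ≤ cost p a1 b1 a2 b2 X Y) (hc : ∀ X Y, cost p a1 b1 a2 b2 X Y ≤ c) :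
    h2Min p a1 b1 a2 b2 S ≤ h2Min p a1 b1 a2 b2 (P ::ₘ S) + c := by
  rw [h2Min_eq_aMinL, h2Min_eq_aMinL, aMinL_perm p a1 b1 a2 b2 (toList_cons_perm P S)]
  exact le_aMinL_cons p a1 b1 a2 b2 P S.toList c hc0 hc

lemma h2Min_add (p a1 b1 a2 b2 : ℤ) (B S : Multiset (ℤ × ℤ)) (c : ℚ)
    (hc0 : ∀ X Y, 0 ≤ cost p a1 b1 a2 b2 X Y) (hc : ∀ X Y, cost p a1 b1 a2 b2 X Y ≤ c) :
    h2Min p a1 b1 a2 b2 (B + S) ≤ h2Min p a1 b1 a2 b2 S + (Multiset.card B : ℚ) * c ∧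
    h2Min p a1 b1 a2 b2 S ≤ h2Min p a1 b1 a2 b2 (B + S) + (Multiset.card B : ℚ) * c := by
  induction B using Multiset.induction_on with
  | empty => simp
  | cons P B ih =>
      have key1 := h2Min_cons_le p a1 b1 a2 b2 P (B + S) c hc
      have key2 := le_h2Min_cons p a1 b1 a2 b2 P (B + S) c hc0 hc
      have hrw : (P ::ₘ B) + S = P ::ₘ (B + S) := by
        rw [Multiset.cons_add]
      have hcard : ((Multiset.card (P ::ₘ B) : ℕ) : ℚ) = (Multiset.card B : ℚ) + 1 := by
        simp
      constructor
      · rw [hrw, hcard]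
        linarith [ih.1]
      · rw [hrw, hcard]
        linarith [ih.2]

def Wm (a1 b1 a2 b2 : ℤ) (S : Multiset (ℤ × ℤ)) : ℚ := (S.map (wt a1 b1 a2 b2)).sum

lemma sum_get (a1 b1 a2 b2 : ℤ) (L : List (ℤ × ℤ)) :
    ∑ i, wt a1 b1 a2 b2 (L.get i) = (L.map (wt a1 b1 a2 b2)).sum := by
  rw [← List.ofFn_getElem_eq_map]
  rw [List.sum_ofFn]
  exact Finset.sum_congr rfl fun i _ => by rw [List.get_eq_getElem]

lemma Wm_toList (a1 b1 a2 b2 : ℤ) (S : Multiset (ℤ × ℤ)) :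
    Wm a1 b1 a2 b2 S = (S.toList.map (wt a1 b1 a2 b2)).sum := by
  rw [Wm]
  conv_lhs => rw [← Multiset.coe_toList S]
  rw [Multiset.map_coe, Multiset.sum_coe]

lemma wt_psub (p a1 b1 a2 b2 : ℤ) (X Y : ℤ × ℤ) :
    wt a1 b1 a2 b2 (p • Y - X) = p * wt a1 b1 a2 b2 Y - wt a1 b1 a2 b2 X := by
  have h1 : (p • Y - X).1 = p * Y.1 - X.1 := rfl
  have h2 : (p • Y - X).2 = p * Y.2 - X.2 := rfl
  rw [wt, wt, wt, h1, h2]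
  push_cast
  ring

lemma hTau_cast (p a1 b1 a2 b2 : ℤ) {n : ℕ} (f : Fin n → ℤ × ℤ) (τ : Equiv.Perm (Fin n)) :
    ((hTau p a1 b1 a2 b2 f τ : ℤ) : ℚ)
      = ((p : ℚ) - 1) * (∑ i, wt a1 b1 a2 b2 (f i)) + h2Tau p a1 b1 a2 b2 f τ := by
  rw [hTau, h2Tau]
  push_cast
  rw [Finset.sum_sub_distrib]
  have hw : ∀ i : Fin n, wt a1 b1 a2 b2 (p • f (τ i) - f i)
      = p * wt a1 b1 a2 b2 (f (τ i)) - wt a1 b1 a2 b2 (f i) := fun i => wt_psub _ _ _ _ _ _ _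
  rw [Finset.sum_congr rfl fun i _ => hw i, Finset.sum_sub_distrib, ← Finset.mul_sum,
    Equiv.sum_comp τ (fun j => wt a1 b1 a2 b2 (f j))]
  ring

lemma cast_inf' {α : Type*} [Fintype α] (H : (Finset.univ : Finset α).Nonempty) (f : α → ℤ) :
    ((Finset.univ.inf' H f : ℤ) : ℚ) = Finset.univ.inf' H (fun a => (f a : ℚ)) := by
  apply le_antisymm
  · apply Finset.le_inf'
    intro b _
    exact_mod_cast Finset.inf'_le f (Finset.mem_univ b)
  · obtain ⟨b, -, hb⟩ := Finset.exists_mem_eq_inf' H f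
    rw [hb]
    exact Finset.inf'_le _ (Finset.mem_univ b)

lemma inf'_add_const {α : Type*} [Fintype α] (H : (Finset.univ : Finset α).Nonempty)
    (g : α → ℚ) (C : ℚ) :
    Finset.univ.inf' H (fun a => C + g a) = C + Finset.univ.inf' H g := by
  apply le_antisymm
  · obtain ⟨b, -, hb⟩ := Finset.exists_mem_eq_inf' H g
    rw [hb]
    exact Finset.inf'_le _ (Finset.mem_univ b)
  · apply Finset.le_inf'
    intro b _
    have := Finset.inf'_le g (Finset.mem_univ b)
    linarith

lemma hMin_cast (p a1 b1 a2 b2 : ℤ) (S : Multiset (ℤ × ℤ)) :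
    ((hMin p a1 b1 a2 b2 S : ℤ) : ℚ)
      = ((p : ℚ) - 1) * Wm a1 b1 a2 b2 S + h2Min p a1 b1 a2 b2 S := by
  rw [hMin, cast_inf']
  have hpt : ∀ τ : Equiv.Perm (Fin S.toList.length),
      ((hTau p a1 b1 a2 b2 (listFn S) τ : ℤ) : ℚ)
        = ((p : ℚ) - 1) * Wm a1 b1 a2 b2 S + h2Tau p a1 b1 a2 b2 (listFn S) τ := by
    intro τ
    rw [hTau_cast]
    congr 2
    rw [listFn, sum_get, ← Wm_toList]
  rw [Finset.inf'_congr _ rfl fun τ _ => hpt τ]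
  rw [inf'_add_const]
  rfl

lemma Wm_val (a1 b1 a2 b2 : ℤ) (T : Finset (ℤ × ℤ)) :
    Wm a1 b1 a2 b2 T.val = ∑ P ∈ T, wt a1 b1 a2 b2 P := rfl

lemma val_decomp (T S : Finset (ℤ × ℤ)) [DecidableEq (ℤ × ℤ)] :
    T.val = (T \ S).val + (T ∩ S).val := by
  have hdis : Disjoint (T \ S) (T ∩ S) := Finset.disjoint_sdiff_inter T S
  have h1 : (T \ S).disjUnion (T ∩ S) hdis = T := by
    rw [Finset.disjUnion_eq_union, Finset.sdiff_union_inter]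
  have h2 : ((T \ S).disjUnion (T ∩ S) hdis).val = (T \ S).val + (T ∩ S).val := rfl
  conv_lhs => rw [← h1]
  exact h2

lemma core (p a1 b1 a2 b2 : ℤ) (c : ℚ)
    (hc0 : ∀ X Y, 0 ≤ cost p a1 b1 a2 b2 X Y)
    (hcc : ∀ X Y, cost p a1 b1 a2 b2 X Y ≤ c)
    (T S : Finset (ℤ × ℤ)) :
    ((hMin p a1 b1 a2 b2 T.val : ℤ) : ℚ) ≤ ((hMin p a1 b1 a2 b2 S.val : ℤ) : ℚ)
      + ((p : ℚ) - 1) * ((∑ P ∈ T \ S, wt a1 b1 a2 b2 P) - ∑ P ∈ S \ T, wt a1 b1 a2 b2 P)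
      + (((T \ S).card : ℚ) + ((S \ T).card : ℚ)) * c := by
  classical
  rw [hMin_cast, hMin_cast]
  have hWT : Wm a1 b1 a2 b2 T.val
      = (∑ P ∈ T ∩ S, wt a1 b1 a2 b2 P) + ∑ P ∈ T \ S, wt a1 b1 a2 b2 P := by
    rw [Wm_val]
    exact (Finset.sum_inter_add_sum_sdiff T S _).symm
  have hWS : Wm a1 b1 a2 b2 S.val
      = (∑ P ∈ T ∩ S, wt a1 b1 a2 b2 P) + ∑ P ∈ S \ T, wt a1 b1 a2 b2 P := by
    rw [Wm_val, Finset.inter_comm]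
    exact (Finset.sum_inter_add_sum_sdiff S T _).symm
  have hW : Wm a1 b1 a2 b2 T.val - Wm a1 b1 a2 b2 S.val
      = (∑ P ∈ T \ S, wt a1 b1 a2 b2 P) - ∑ P ∈ S \ T, wt a1 b1 a2 b2 P := by
    rw [hWT, hWS]; ring
  have hW2 : ((p : ℚ) - 1) * Wm a1 b1 a2 b2 T.val
      = ((p : ℚ) - 1) * Wm a1 b1 a2 b2 S.val
        + ((p : ℚ) - 1) * ((∑ P ∈ T \ S, wt a1 b1 a2 b2 P) - ∑ P ∈ S \ T, wt a1 b1 a2 b2 P) := by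
    linear_combination ((p : ℚ) - 1) * hW
  -- h2Min bounds
  have h2a : h2Min p a1 b1 a2 b2 T.val
      ≤ h2Min p a1 b1 a2 b2 (T ∩ S).val + ((T \ S).card : ℚ) * c := by
    have := (h2Min_add p a1 b1 a2 b2 (T \ S).val (T ∩ S).val c hc0 hcc).1
    rw [← val_decomp T S] at this
    have hcard : ((Multiset.card (T \ S).val : ℕ) : ℚ) = ((T \ S).card : ℚ) := rfl
    rw [hcard] at this
    exact this
  have h2b : h2Min p a1 b1 a2 b2 (T ∩ S).val
      ≤ h2Min p a1 b1 a2 b2 S.val + ((S \ T).card : ℚ) * c := by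
    have := (h2Min_add p a1 b1 a2 b2 (S \ T).val (S ∩ T).val c hc0 hcc).2
    rw [← val_decomp S T] at this
    have hcard : ((Multiset.card (S \ T).val : ℕ) : ℚ) = ((S \ T).card : ℚ) := rfl
    rw [hcard] at this
    rw [Finset.inter_comm]
    exact this
  linarith

lemma mainIneq (p a1 b1 a2 b2 : ℤ) (c δ t : ℚ)
    (hc0 : ∀ X Y, 0 ≤ cost p a1 b1 a2 b2 X Y)
    (hcc : ∀ X Y, cost p a1 b1 a2 b2 X Y ≤ c)
    (hgap : 2 * c < ((p : ℚ) - 1) * δ)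
    (hp1 : 0 ≤ (p : ℚ) - 1)
    (T S1 S2 : Finset (ℤ × ℤ)) (l1 l2 : ℕ)
    (hS1card : S1.card = l1) (hS2card : S2.card = l2)
    (hl1 : l1 < T.card) (hl2 : T.card < l2)
    (hTt : ∀ P ∈ T, wt a1 b1 a2 b2 P ≤ t)
    (hS1out : ∀ P ∈ S1, P ∉ T → t + δ ≤ wt a1 b1 a2 b2 P)
    (hS2out : ∀ P ∈ S2, P ∉ T → t + δ ≤ wt a1 b1 a2 b2 P) :
    ((l2 : ℤ) - T.card) * hMin p a1 b1 a2 b2 S1.val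
      + ((T.card : ℤ) - l1) * hMin p a1 b1 a2 b2 S2.val
      > ((l2 : ℤ) - l1) * hMin p a1 b1 a2 b2 T.val := by
  classical
  set α : ℚ := ((p : ℚ) - 1) * t + c with hα
  set β : ℚ := ((p : ℚ) - 1) * (t + δ) - c with hβ
  set X : ℚ := (T.card : ℚ) with hX
  set H : ℚ := ((hMin p a1 b1 a2 b2 T.val : ℤ) : ℚ) with hH
  set M1 : ℚ := ((hMin p a1 b1 a2 b2 S1.val : ℤ) : ℚ) with hM1def
  set M2 : ℚ := ((hMin p a1 b1 a2 b2 S2.val : ℤ) : ℚ) with hM2def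
  -- bound for S1
  have hM1 : H - (X - (l1 : ℚ)) * α ≤ M1 := by
    have hcore := core p a1 b1 a2 b2 c hc0 hcc T S1
    set A : ℚ := ((T \ S1).card : ℚ) with hA
    set B : ℚ := ((S1 \ T).card : ℚ) with hB
    have hAB : A - B = X - (l1 : ℚ) := by
      have h1 := Finset.card_sdiff_add_card_inter T S1
      have h2 := Finset.card_sdiff_add_card_inter S1 T
      have h3 : (T ∩ S1).card = (S1 ∩ T).card := by rw [Finset.inter_comm]
      rw [hA, hB, hX, ← hS1card]
      push_cast
      have h1' : ((T \ S1).card : ℚ) + ((T ∩ S1).card : ℚ) = (T.card : ℚ) := by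
        exact_mod_cast congrArg (Nat.cast : ℕ → ℚ) h1
      have h2' : ((S1 \ T).card : ℚ) + ((S1 ∩ T).card : ℚ) = (S1.card : ℚ) := by
        exact_mod_cast congrArg (Nat.cast : ℕ → ℚ) h2
      have h3' : ((T ∩ S1).card : ℚ) = ((S1 ∩ T).card : ℚ) := by
        exact_mod_cast congrArg (Nat.cast : ℕ → ℚ) h3
      linarith
    have hBnn : 0 ≤ B := by rw [hB]; positivity
    have hb1 : ∑ P ∈ T \ S1, wt a1 b1 a2 b2 P ≤ A * t := by
      have := Finset.sum_le_card_nsmul (T \ S1) (wt a1 b1 a2 b2) t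
        (fun P hP => hTt P (Finset.mem_sdiff.mp hP).1)
      rwa [nsmul_eq_mul] at this
    have hb2 : B * (t + δ) ≤ ∑ P ∈ S1 \ T, wt a1 b1 a2 b2 P := by
      have := Finset.card_nsmul_le_sum (S1 \ T) (wt a1 b1 a2 b2) (t + δ)
        (fun P hP => hS1out P (Finset.mem_sdiff.mp hP).1 (Finset.mem_sdiff.mp hP).2)
      rwa [nsmul_eq_mul] at this
    -- multiply by p-1 ≥ 0
    have hm1 : ((p : ℚ) - 1) * (∑ P ∈ T \ S1, wt a1 b1 a2 b2 P) ≤ ((p : ℚ) - 1) * (A * t) :=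
      mul_le_mul_of_nonneg_left hb1 hp1
    have hm2 : ((p : ℚ) - 1) * (B * (t + δ)) ≤ ((p : ℚ) - 1) * (∑ P ∈ S1 \ T, wt a1 b1 a2 b2 P) :=
      mul_le_mul_of_nonneg_left hb2 hp1
    have hB2 : 0 ≤ B * (((p : ℚ) - 1) * δ - 2 * c) :=
      mul_nonneg hBnn (by linarith)
    have hABα : ((p : ℚ) - 1) * (A * t)
        = ((p : ℚ) - 1) * (B * t) + ((p : ℚ) - 1) * ((X - (l1 : ℚ)) * t) := by
      linear_combination ((p : ℚ) - 1) * t * hAB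
    have hABc : (A + B) * c = 2 * B * c + (X - (l1 : ℚ)) * c := by
      linear_combination c * hAB
    rw [hα]
    linarith [hcore, hm1, hm2, hB2, hABα, hABc]
  -- bound for S2
  have hM2 : H + ((l2 : ℚ) - X) * β ≤ M2 := by
    have hcore := core p a1 b1 a2 b2 c hc0 hcc T S2
    set A : ℚ := ((T \ S2).card : ℚ) with hA
    set B : ℚ := ((S2 \ T).card : ℚ) with hB
    have hAB : B - A = (l2 : ℚ) - X := by
      have h1 := Finset.card_sdiff_add_card_inter T S2
      have h2 := Finset.card_sdiff_add_card_inter S2 T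
      have h3 : (T ∩ S2).card = (S2 ∩ T).card := by rw [Finset.inter_comm]
      rw [hA, hB, hX, ← hS2card]
      have h1' : ((T \ S2).card : ℚ) + ((T ∩ S2).card : ℚ) = (T.card : ℚ) := by
        exact_mod_cast congrArg (Nat.cast : ℕ → ℚ) h1
      have h2' : ((S2 \ T).card : ℚ) + ((S2 ∩ T).card : ℚ) = (S2.card : ℚ) := by
        exact_mod_cast congrArg (Nat.cast : ℕ → ℚ) h2
      have h3' : ((T ∩ S2).card : ℚ) = ((S2 ∩ T).card : ℚ) := by
        exact_mod_cast congrArg (Nat.cast : ℕ → ℚ) h3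
      linarith
    have hAnn : 0 ≤ A := by rw [hA]; positivity
    have hb1 : ∑ P ∈ T \ S2, wt a1 b1 a2 b2 P ≤ A * t := by
      have := Finset.sum_le_card_nsmul (T \ S2) (wt a1 b1 a2 b2) t
        (fun P hP => hTt P (Finset.mem_sdiff.mp hP).1)
      rwa [nsmul_eq_mul] at this
    have hb2 : B * (t + δ) ≤ ∑ P ∈ S2 \ T, wt a1 b1 a2 b2 P := by
      have := Finset.card_nsmul_le_sum (S2 \ T) (wt a1 b1 a2 b2) (t + δ)
        (fun P hP => hS2out P (Finset.mem_sdiff.mp hP).1 (Finset.mem_sdiff.mp hP).2)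
      rwa [nsmul_eq_mul] at this
    have hm1 : ((p : ℚ) - 1) * (∑ P ∈ T \ S2, wt a1 b1 a2 b2 P) ≤ ((p : ℚ) - 1) * (A * t) :=
      mul_le_mul_of_nonneg_left hb1 hp1
    have hm2 : ((p : ℚ) - 1) * (B * (t + δ)) ≤ ((p : ℚ) - 1) * (∑ P ∈ S2 \ T, wt a1 b1 a2 b2 P) :=
      mul_le_mul_of_nonneg_left hb2 hp1
    have hA2 : 0 ≤ A * (((p : ℚ) - 1) * δ - 2 * c) :=
      mul_nonneg hAnn (by linarith)
    have hABβ : ((p : ℚ) - 1) * (B * (t + δ))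
        = ((p : ℚ) - 1) * (A * (t + δ)) + ((p : ℚ) - 1) * ((((l2 : ℚ)) - X) * (t + δ)) := by
      linear_combination ((p : ℚ) - 1) * (t + δ) * hAB
    have hABc : (A + B) * c = 2 * A * c + (((l2 : ℚ)) - X) * c := by
      linear_combination c * hAB
    rw [hβ]
    linarith [hcore, hm1, hm2, hA2, hABβ, hABc]
  -- combine
  have hx1 : (1 : ℚ) ≤ X - (l1 : ℚ) := by
    rw [hX]
    have : (l1 : ℚ) + 1 ≤ (T.card : ℚ) := by exact_mod_cast hl1
    linarith
  have hx2 : (1 : ℚ) ≤ (l2 : ℚ) - X := by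
    rw [hX]
    have : (T.card : ℚ) + 1 ≤ (l2 : ℚ) := by exact_mod_cast hl2
    linarith
  have hβα : 0 < β - α := by rw [hα, hβ]; nlinarith [hgap]
  have final : ((l2 : ℚ) - l1) * H < ((l2 : ℚ) - X) * M1 + (X - (l1 : ℚ)) * M2 := by
    have e1 : ((l2 : ℚ) - X) * (H - (X - (l1 : ℚ)) * α) ≤ ((l2 : ℚ) - X) * M1 :=
      mul_le_mul_of_nonneg_left hM1 (by linarith)
    have e2 : (X - (l1 : ℚ)) * (H + ((l2 : ℚ) - X) * β) ≤ (X - (l1 : ℚ)) * M2 :=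
      mul_le_mul_of_nonneg_left hM2 (by linarith)
    have e3 : ((l2 : ℚ) - X) * (H - (X - (l1 : ℚ)) * α) + (X - (l1 : ℚ)) * (H + ((l2 : ℚ) - X) * β)
        = ((l2 : ℚ) - l1) * H + (X - (l1 : ℚ)) * (((l2 : ℚ) - X) * (β - α)) := by ring
    have e4 : (1 : ℚ) * (1 * (β - α)) ≤ (X - (l1 : ℚ)) * (((l2 : ℚ) - X) * (β - α)) := by
      apply mul_le_mul hx1 _ _ (by linarith)
      · exact mul_le_mul hx2 le_rfl (by linarith) (by linarith)
      · positivity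
    have e5 : 0 < (X - (l1 : ℚ)) * (((l2 : ℚ) - X) * (β - α)) := by
      calc (0 : ℚ) < 1 * (1 * (β - α)) := by linarith
      _ ≤ _ := e4
    linarith
  rw [hH, hM1def, hM2def, hX] at final
  exact_mod_cast final

theorem statement12 (p a1 b1 a2 b2 : ℤ)
    (ha1 : 0 ≤ a1) (hb1 : 0 ≤ b1) (ha2 : 0 ≤ a2) (hb2 : 0 ≤ b2)
    (hD : 0 < a2 * b1 - a1 * b2)
    (hp : Prime p) (hpD : ¬ p ∣ (a2 * b1 - a1 * b2))
    (hpg : 2 * ((a2 * b1 - a1 * b2 : ℤ) : ℚ) /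
      (Int.gcd (a1 - a2) (b1 - b2) : ℚ) + 1 < (p : ℚ))
    (m : ℕ → ℤ)
    (hm : ∀ l : ℕ, IsLeast {h : ℤ | ∃ S : Finset (ℤ × ℤ),
      (S : Set (ℤ × ℤ)) ⊆ MDelta a1 b1 a2 b2 ∧ S.card = l ∧
      h = hMin p a1 b1 a2 b2 S.val} (m l))
    (k : ℕ) (hk : 1 ≤ k)
    (Tk T'k : Finset (ℤ × ℤ))
    (hTk : (Tk : Set (ℤ × ℤ)) =
      {P ∈ MDelta a1 b1 a2 b2 | wt a1 b1 a2 b2 P < (k : ℚ)})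
    (hT'k : (T'k : Set (ℤ × ℤ)) =
      {P ∈ MDelta a1 b1 a2 b2 | wt a1 b1 a2 b2 P ≤ (k : ℚ)}) :
    (∀ l1 l2 : ℕ, l1 < Tk.card → Tk.card < l2 →
      ((l2 : ℤ) - Tk.card) * m l1 + ((Tk.card : ℤ) - l1) * m l2 >
        ((l2 : ℤ) - l1) * hMin p a1 b1 a2 b2 Tk.val) ∧
    (∀ l1 l2 : ℕ, l1 < T'k.card → T'k.card < l2 →
      ((l2 : ℤ) - T'k.card) * m l1 + ((T'k.card : ℤ) - l1) * m l2 >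
        ((l2 : ℤ) - l1) * hMin p a1 b1 a2 b2 T'k.val) := by
  classical
  set gZ : ℤ := (Int.gcd (a1 - a2) (b1 - b2) : ℤ) with hgdef
  have hg1 : gZ ∣ (a1 - a2) := Int.gcd_dvd_left _ _
  have hg2 : gZ ∣ (b1 - b2) := Int.gcd_dvd_right _ _
  have hgD : gZ ∣ (a2 * b1 - a1 * b2) := by
    have hiden : a2 * b1 - a1 * b2 = a2 * (b1 - b2) - (a1 - a2) * b2 := by ring
    rw [hiden]
    exact dvd_sub (hg2.mul_left a2) (hg1.mul_right b2)
  have hgne : gZ ≠ 0 := by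
    intro h0
    rw [hgdef] at h0
    have h0' : Int.gcd (a1 - a2) (b1 - b2) = 0 := by exact_mod_cast h0
    obtain ⟨hA, hB⟩ := Int.gcd_eq_zero_iff.mp h0'
    have ha : a1 = a2 := by linarith [sub_eq_zero.mp hA]
    have hb : b1 = b2 := by linarith [sub_eq_zero.mp hB]
    rw [ha, hb] at hD
    nlinarith [hD]
  have hgpos : 0 < gZ := lt_of_le_of_ne (by positivity) (Ne.symm hgne)
  obtain ⟨d, hd⟩ := hgD
  have hdpos : 0 < d := by nlinarith [hD, hgpos, hd]
  have hdqpos : (0 : ℚ) < (d : ℚ) := by exact_mod_cast hdpos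
  have hgqne : (gZ : ℚ) ≠ 0 := Int.cast_ne_zero.mpr hgne
  -- p > 2 d + 1
  have hp2 : 2 * (d : ℚ) + 1 < (p : ℚ) := by
    have hDq : ((a2 * b1 - a1 * b2 : ℤ) : ℚ) = (gZ : ℚ) * (d : ℚ) := by
      exact_mod_cast congrArg (fun x : ℤ => (x : ℚ)) hd
    have gq : ((Int.gcd (a1 - a2) (b1 - b2) : ℕ) : ℚ) = (gZ : ℚ) := by
      rw [hgdef]; push_cast; ring
    have hrw : 2 * ((a2 * b1 - a1 * b2 : ℤ) : ℚ) / ((Int.gcd (a1 - a2) (b1 - b2) : ℕ) : ℚ)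
        = 2 * (d : ℚ) := by
      rw [hDq, gq]
      field_simp
    rw [hrw] at hpg
    exact hpg
  have hp1 : 0 ≤ (p : ℚ) - 1 := by linarith
  -- integrality of weights
  have wt_den : ∀ P : ℤ × ℤ, ∃ z : ℤ, wt a1 b1 a2 b2 P = (z : ℚ) / (d : ℚ) := by
    intro P
    have hL : gZ ∣ ((b1 - b2) * P.1 + (a2 - a1) * P.2) := by
      apply dvd_add
      · exact hg2.mul_right _
      · have hng : a2 - a1 = -(a1 - a2) := by ring
        rw [hng]
        exact (dvd_neg.mpr hg1).mul_right _
    obtain ⟨z, hz⟩ := hL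
    refine ⟨z, ?_⟩
    rw [wt, hz, hd]
    push_cast
    rw [mul_div_mul_left _ _ hgqne]
  -- cost bounds
  set cB : ℚ := ((d : ℚ) - 1) / (d : ℚ) with hcB
  have hc0 : ∀ X Y, 0 ≤ cost p a1 b1 a2 b2 X Y := by
    intro X Y
    rw [cost]
    have := Int.le_ceil (wt a1 b1 a2 b2 (p • Y - X))
    linarith
  have hcc : ∀ X Y, cost p a1 b1 a2 b2 X Y ≤ cB := by
    intro X Y
    obtain ⟨z, hz⟩ := wt_den (p • Y - X)
    rw [cost, hz]
    have h1 : (⌈(z : ℚ) / (d : ℚ)⌉ : ℚ) < (z : ℚ) / (d : ℚ) + 1 := Int.ceil_lt_add_one _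
    have h2 : (⌈(z : ℚ) / (d : ℚ)⌉ : ℚ) * (d : ℚ) < (z : ℚ) + (d : ℚ) := by
      have h2' := mul_lt_mul_of_pos_right h1 hdqpos
      rw [add_mul, div_mul_cancel₀ _ (ne_of_gt hdqpos)] at h2'
      linarith
    have h3 : ⌈(z : ℚ) / (d : ℚ)⌉ * d < z + d := by exact_mod_cast h2
    have h4 : ⌈(z : ℚ) / (d : ℚ)⌉ * d ≤ z + d - 1 := by omega
    have h5 : (⌈(z : ℚ) / (d : ℚ)⌉ : ℚ) * (d : ℚ) ≤ (z : ℚ) + (d : ℚ) - 1 := by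
      exact_mod_cast h4
    rw [hcB, le_div_iff₀ hdqpos, sub_mul, div_mul_cancel₀ _ (ne_of_gt hdqpos)]
    linarith
  have hgap : 2 * cB < ((p : ℚ) - 1) * (1 / (d : ℚ)) := by
    have hkey : ((p : ℚ) - 1) * (1 / (d : ℚ)) - 2 * cB
        = (((p : ℚ) - 1) - 2 * ((d : ℚ) - 1)) / (d : ℚ) := by
      rw [hcB]
      field_simp
    have hpos : 0 < (((p : ℚ) - 1) - 2 * ((d : ℚ) - 1)) / (d : ℚ) := by
      apply div_pos _ hdqpos
      linarith
    linarith [hkey, hpos]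
  -- integrality helpers
  have helper1 : ∀ w : ℚ, (∃ z : ℤ, w = (z : ℚ) / (d : ℚ)) → w < (k : ℚ) →
      w ≤ (k : ℚ) - 1 / (d : ℚ) := by
    rintro w ⟨z, rfl⟩ hlt
    rw [div_lt_iff₀ hdqpos] at hlt
    have h2 : z < (k : ℤ) * d := by exact_mod_cast hlt
    have h3 : z ≤ (k : ℤ) * d - 1 := by omega
    have h4 : (z : ℚ) ≤ (k : ℚ) * (d : ℚ) - 1 := by exact_mod_cast h3
    rw [div_le_iff₀ hdqpos]
    have hid : ((k : ℚ) - 1 / (d : ℚ)) * (d : ℚ) = (k : ℚ) * (d : ℚ) - 1 := by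
      field_simp
    linarith [hid]
  have helper2 : ∀ w : ℚ, (∃ z : ℤ, w = (z : ℚ) / (d : ℚ)) → (k : ℚ) < w →
      (k : ℚ) + 1 / (d : ℚ) ≤ w := by
    rintro w ⟨z, rfl⟩ hlt
    rw [lt_div_iff₀ hdqpos] at hlt
    have h2 : (k : ℤ) * d < z := by exact_mod_cast hlt
    have h3 : (k : ℤ) * d + 1 ≤ z := by omega
    have h4 : (k : ℚ) * (d : ℚ) + 1 ≤ (z : ℚ) := by exact_mod_cast h3
    rw [le_div_iff₀ hdqpos]
    have hid : ((k : ℚ) + 1 / (d : ℚ)) * (d : ℚ) = (k : ℚ) * (d : ℚ) + 1 := by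
      field_simp
    linarith [hid]
  -- membership
  have hTkmem : ∀ P : ℤ × ℤ,
      P ∈ Tk ↔ P ∈ MDelta a1 b1 a2 b2 ∧ wt a1 b1 a2 b2 P < (k : ℚ) := by
    intro P
    rw [← Finset.mem_coe, hTk]
    simp [Set.mem_setOf_eq]
  have hT'kmem : ∀ P : ℤ × ℤ,
      P ∈ T'k ↔ P ∈ MDelta a1 b1 a2 b2 ∧ wt a1 b1 a2 b2 P ≤ (k : ℚ) := by
    intro P
    rw [← Finset.mem_coe, hT'k]
    simp [Set.mem_setOf_eq]
  constructor
  · intro l1 l2 hl1 hl2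
    obtain ⟨S1, hS1sub, hS1card, hS1eq⟩ := (hm l1).1
    obtain ⟨S2, hS2sub, hS2card, hS2eq⟩ := (hm l2).1
    rw [hS1eq, hS2eq]
    apply mainIneq p a1 b1 a2 b2 cB (1 / (d : ℚ)) ((k : ℚ) - 1 / (d : ℚ)) hc0 hcc hgap hp1
      Tk S1 S2 l1 l2 hS1card hS2card hl1 hl2
    · intro P hP
      exact helper1 _ (wt_den P) ((hTkmem P).mp hP).2
    · intro P hP hPT
      have hPM : P ∈ MDelta a1 b1 a2 b2 := hS1sub (Finset.mem_coe.mpr hP)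
      have hnlt : ¬ wt a1 b1 a2 b2 P < (k : ℚ) := fun hlt => hPT ((hTkmem P).mpr ⟨hPM, hlt⟩)
      have hge : (k : ℚ) ≤ wt a1 b1 a2 b2 P := not_lt.mp hnlt
      linarith
    · intro P hP hPT
      have hPM : P ∈ MDelta a1 b1 a2 b2 := hS2sub (Finset.mem_coe.mpr hP)
      have hnlt : ¬ wt a1 b1 a2 b2 P < (k : ℚ) := fun hlt => hPT ((hTkmem P).mpr ⟨hPM, hlt⟩)
      have hge : (k : ℚ) ≤ wt a1 b1 a2 b2 P := not_lt.mp hnlt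
      linarith
  · intro l1 l2 hl1 hl2
    obtain ⟨S1, hS1sub, hS1card, hS1eq⟩ := (hm l1).1
    obtain ⟨S2, hS2sub, hS2card, hS2eq⟩ := (hm l2).1
    rw [hS1eq, hS2eq]
    apply mainIneq p a1 b1 a2 b2 cB (1 / (d : ℚ)) ((k : ℚ)) hc0 hcc hgap hp1
      T'k S1 S2 l1 l2 hS1card hS2card hl1 hl2
    · intro P hP
      exact ((hT'kmem P).mp hP).2
    · intro P hP hPT
      have hPM : P ∈ MDelta a1 b1 a2 b2 := hS1sub (Finset.mem_coe.mpr hP)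
      have hnle : ¬ wt a1 b1 a2 b2 P ≤ (k : ℚ) := fun hle => hPT ((hT'kmem P).mpr ⟨hPM, hle⟩)
      exact helper2 _ (wt_den P) (not_le.mp hnle)
    · intro P hP hPT
      have hPM : P ∈ MDelta a1 b1 a2 b2 := hS2sub (Finset.mem_coe.mpr hP)
      have hnle : ¬ wt a1 b1 a2 b2 P ≤ (k : ℚ) := fun hle => hPT ((hT'kmem P).mpr ⟨hPM, hle⟩)
      exact helper2 _ (wt_den P) (not_le.mp hnle)
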